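/- Let K be a Melnikov formation, let L1 and L2 be finite groups, and let (G, p1, p2) be a witness system for the compatibility of (L1, L2) such that |G| is minimal among all witness systems for (L1, L2). Let N1 = ker(p1) and N2 = ker(p2). If O_K(p2(N1)) = 1 or O_K(p1(N2)) = 1, then O_K(N1) = 1 and O_K(N2) = 1. -/

import Mathlib

/-- A Melnikov formation: a class of finite groups containing the trivial group,
closed under isomorphism, normal subgroups, quotients and extensions. -/
structure MelnikovFormation : Type 1 where
  mem : ∀ (G : Type) [Group G] [Finite G], Prop
  mem_of_subsingleton : ∀ (G : Type) [Group G] [Finite G], Subsingleton G → mem G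
  mem_of_iso : ∀ (G : Type) [Group G] [Finite G] (H : Type) [Group H] [Finite H],
    (G ≃* H) → mem G → mem H
  mem_of_normal : ∀ (G : Type) [Group G] [Finite G] (N : Subgroup G), N.Normal →
    mem G → mem ↥N
  mem_quotient : ∀ (G : Type) [Group G] [Finite G] (N : Subgroup G) [N.Normal],
    mem G → mem (G ⧸ N)
  mem_of_extension : ∀ (G : Type) [Group G] [Finite G] (N : Subgroup G) [N.Normal],
    mem ↥N → mem (G ⧸ N) → mem G

/-- `K.memQuot G N h` says that the quotient `G ⧸ N` belongs to the class `K`. -/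
def MelnikovFormation.memQuot (K : MelnikovFormation) (G : Type) [Group G] [Finite G]
    (N : Subgroup G) (h : N.Normal) : Prop :=
  letI := h
  K.mem (G ⧸ N)

/-- The `K`-residue `O^K(G)`: the intersection of all normal subgroups `A ⊴ G` with `G ⧸ A ∈ K`. -/
def Kresidue (K : MelnikovFormation) (G : Type) [Group G] [Finite G] : Subgroup G :=
  sInf {A : Subgroup G | ∃ h : A.Normal, K.memQuot G A h}

/-- The `K`-radical `O_K(G)`: the subgroup generated by all normal subgroups `A ⊴ G` with `A ∈ K`. -/
def Kradical (K : MelnikovFormation) (G : Type) [Group G] [Finite G] : Subgroup G :=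
  sSup {A : Subgroup G | A.Normal ∧ K.mem ↥A}

/-- `(G, p1, p2)` is a witness system for the compatibility of `(L1, L2)`:
`p1 : G → L1` and `p2 : G → L2` are surjective with isomorphic kernels. -/
structure IsWitnessSystem (L1 : Type) [Group L1] (L2 : Type) [Group L2]
    (G : Type) [Group G] (p1 : G →* L1) (p2 : G →* L2) : Prop where
  surjective_fst : Function.Surjective p1
  surjective_snd : Function.Surjective p2
  ker_iso : Nonempty (↥p1.ker ≃* ↥p2.ker)

/-- A witness system whose group `G` has minimal order among all witness systems
for the compatibility of `(L1, L2)`. -/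
def IsMinimalWitnessSystem (L1 : Type) [Group L1] (L2 : Type) [Group L2]
    (G : Type) [Group G] [Finite G] (p1 : G →* L1) (p2 : G →* L2) : Prop :=
  IsWitnessSystem L1 L2 G p1 p2 ∧
    ∀ (G' : Type) (_ : Group G') (_ : Finite G') (q1 : G' →* L1) (q2 : G' →* L2),
      IsWitnessSystem L1 L2 G' q1 q2 → Nat.card G ≤ Nat.card G'

/-- Lemma 3.4(iii): in a minimal witness system, if `O_K(p2(N1)) = 1` or
`O_K(p1(N2)) = 1`, then `O_K(N1) = 1 = O_K(N2)`. -/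
lemma sup_mem_radSet (K : MelnikovFormation) (G : Type) [Group G] [Finite G]
    {A B : Subgroup G} (hA : A.Normal ∧ K.mem ↥A) (hB : B.Normal ∧ K.mem ↥B) :
    (A ⊔ B).Normal ∧ K.mem ↥(A ⊔ B) := by
  haveI := hA.1; haveI := hB.1
  refine ⟨inferInstance, ?_⟩
  haveI : (B.subgroupOf (A ⊔ B)).Normal := Subgroup.Normal.subgroupOf hB.1 _
  refine K.mem_of_extension _ (B.subgroupOf (A ⊔ B)) ?_ ?_
  · exact K.mem_of_iso _ _ (Subgroup.subgroupOfEquivOfLe le_sup_right).symm hB.2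
  · haveI : (B.subgroupOf A).Normal := Subgroup.Normal.subgroupOf hB.1 _
    have e := QuotientGroup.quotientInfEquivProdNormalQuotient A B
    exact K.mem_of_iso _ _ e (K.mem_quotient _ _ hA.2)

lemma radical_mem (K : MelnikovFormation) (G : Type) [Group G] [Finite G] :
    (Kradical K G).Normal ∧ K.mem ↥(Kradical K G) := by
  have hbot : (⊥ : Subgroup G) ∈ {A : Subgroup G | A.Normal ∧ K.mem ↥A} := by
    refine ⟨inferInstance, K.mem_of_subsingleton _ ?_⟩
    infer_instance
  have := Set.Finite.induction_on
    (motive := fun T _ => T ⊆ {A : Subgroup G | A.Normal ∧ K.mem ↥A} → sSup T ∈ {A : Subgroup G | A.Normal ∧ K.mem ↥A})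
    {A : Subgroup G | A.Normal ∧ K.mem ↥A} (Set.toFinite _) (by simp [hbot]) ?_ subset_rfl
  · exact this
  · intro a T _ _ ih haT
    rw [sSup_insert]
    exact sup_mem_radSet K G (haT (Set.mem_insert a T)) (ih fun x hx => haT (Set.mem_insert_of_mem a hx))

lemma radical_map_equiv (K : MelnikovFormation) (G : Type) [Group G] [Finite G]
    (H : Type) [Group H] [Finite H] (e : G ≃* H) :
    (Kradical K G).map e.toMonoidHom = Kradical K H := by
  have key : ∀ (G : Type) [Group G] [Finite G] (H : Type) [Group H] [Finite H] (e : G ≃* H),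
      (Kradical K G).map e.toMonoidHom ≤ Kradical K H := by
    intro G _ _ H _ _ e
    rw [Kradical, (Subgroup.gc_map_comap e.toMonoidHom).l_sSup]
    refine iSup_le fun A => iSup_le fun hA => ?_
    refine le_sSup ⟨hA.1.map e.toMonoidHom e.surjective, ?_⟩
    exact K.mem_of_iso _ _ (e.subgroupMap A) hA.2
  refine le_antisymm (key G H e) ?_
  have h2 := key H G e.symm
  have : ((Kradical K H).map e.symm.toMonoidHom).map e.toMonoidHom ≤ (Kradical K G).map e.toMonoidHom :=
    Subgroup.map_mono h2
  rwa [Subgroup.map_map, show e.toMonoidHom.comp e.symm.toMonoidHom = MonoidHom.id H by ext x; simp,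
    Subgroup.map_id] at this

/-- The radical of a normal subgroup, pushed to the ambient group, is normal. -/
lemma radical_map_subtype_normal (K : MelnikovFormation) (G : Type) [Group G] [Finite G]
    (N : Subgroup G) (hN : N.Normal) : ((Kradical K ↥N).map N.subtype).Normal := by
  haveI := hN
  constructor
  rintro _ ⟨x, hx, rfl⟩ g
  refine ⟨(MulAut.conjNormal g : MulAut ↥N) x, ?_, MulAut.conjNormal_apply g x⟩
  have := radical_map_equiv K ↥N ↥N ((MulAut.conjNormal g : MulAut ↥N) : ↥N ≃* ↥N)
  rw [← this]
  exact ⟨x, hx, rfl⟩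

lemma radical_map_subtype_memK (K : MelnikovFormation) (G : Type) [Group G] [Finite G]
    (N : Subgroup G) : K.mem ↥((Kradical K ↥N).map N.subtype) :=
  K.mem_of_iso _ _ ((Kradical K ↥N).equivMapOfInjective N.subtype N.subtype_injective)
    (radical_mem K ↥N).2

/-- image of a K-group under a hom is in K -/
lemma memK_map (K : MelnikovFormation) (G : Type) [Group G] [Finite G]
    (L : Type) [Group L] [Finite L] (f : G →* L) (H : Subgroup G) (hH : K.mem ↥H) :
    K.mem ↥(H.map f) := by
  set f' : ↥H →* L := f.comp H.subtype with hf'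
  have hrange : f'.range = H.map f := by
    rw [hf', MonoidHom.range_comp, Subgroup.range_subtype]
  have e1 : (↥H ⧸ f'.ker) ≃* f'.range := QuotientGroup.quotientKerEquivRange f'
  have e2 : ↥f'.range ≃* ↥(H.map f) := MulEquiv.subgroupCongr hrange
  exact K.mem_of_iso _ _ (e1.trans e2) (K.mem_quotient _ f'.ker hH)

lemma eq_of_le_of_card_le' {G : Type} [Group G] {H K : Subgroup G} [Finite G]
    (h : H ≤ K) (h2 : Nat.card K ≤ Nat.card H) : H = K :=
  SetLike.coe_injective <| Set.eq_of_subset_of_ncard_le h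
    (by rwa [← Nat.card_coe_set_eq, ← Nat.card_coe_set_eq]) ((K : Set G).toFinite)

lemma aux_main (K : MelnikovFormation)
    (L1 : Type) [Group L1] [Finite L1] (L2 : Type) [Group L2] [Finite L2]
    (G : Type) [Group G] [Finite G] (p1 : G →* L1) (p2 : G →* L2)
    (hmin : IsMinimalWitnessSystem L1 L2 G p1 p2)
    (h : Kradical K ↥(p1.ker.map p2) = ⊥) :
    Kradical K ↥p1.ker = ⊥ ∧ Kradical K ↥p2.ker = ⊥ := by
  obtain ⟨⟨hs1, hs2, ⟨φ⟩⟩, hminimal⟩ := hmin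
  set N1 := p1.ker with hN1
  set N2 := p2.ker with hN2
  set R : Subgroup G := (Kradical K ↥N1).map N1.subtype with hR
  have hRnormal : R.Normal := radical_map_subtype_normal K G N1 p1.normal_ker
  have hRmem : K.mem ↥R := radical_map_subtype_memK K G N1
  have hRN1 : R ≤ N1 := Subgroup.map_subtype_le _
  -- Step A : R ≤ N2
  have hRN2 : R ≤ N2 := by
    have hle : R.map p2 ≤ N1.map p2 := Subgroup.map_mono hRN1
    have hnorm2 : (R.map p2).Normal := hRnormal.map p2 hs2
    have hS : (R.map p2).subgroupOf (N1.map p2) ≤ Kradical K ↥(N1.map p2) := by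
      refine le_sSup ⟨hnorm2.subgroupOf _, ?_⟩
      exact K.mem_of_iso _ _ (Subgroup.subgroupOfEquivOfLe hle).symm (memK_map K G L2 p2 R hRmem)
    rw [h, le_bot_iff, Subgroup.subgroupOf_eq_bot] at hS
    have hb : R.map p2 = ⊥ := le_bot_iff.mp (hS le_rfl hle)
    rw [Subgroup.map_eq_bot_iff] at hb
    exact hb
  -- Step B/C : R equals the radical of N2 pushed forward
  set R2 : Subgroup G := (Kradical K ↥N2).map N2.subtype with hR2
  have hcard12 : Nat.card ↥(Kradical K ↥N1) = Nat.card ↥(Kradical K ↥N2) := by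
    rw [← radical_map_equiv K ↥N1 ↥N2 φ]
    exact Nat.card_congr ((Kradical K ↥N1).equivMapOfInjective φ.toMonoidHom φ.injective).toEquiv
  have hRleR2 : R ≤ R2 := by
    have hmem : R.subgroupOf N2 ≤ Kradical K ↥N2 := by
      refine le_sSup ⟨hRnormal.subgroupOf _, ?_⟩
      exact K.mem_of_iso _ _ (Subgroup.subgroupOfEquivOfLe hRN2).symm hRmem
    have : (R.subgroupOf N2).map N2.subtype ≤ R2 := Subgroup.map_mono hmem
    rwa [Subgroup.subgroupOf_map_subtype, inf_eq_left.mpr hRN2] at this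
  have hcardRR2 : Nat.card ↥R2 ≤ Nat.card ↥R := by
    have c1 : Nat.card ↥R = Nat.card ↥(Kradical K ↥N1) :=
      (Nat.card_congr ((Kradical K ↥N1).equivMapOfInjective N1.subtype N1.subtype_injective).toEquiv).symm
    have c2 : Nat.card ↥R2 = Nat.card ↥(Kradical K ↥N2) :=
      (Nat.card_congr ((Kradical K ↥N2).equivMapOfInjective N2.subtype N2.subtype_injective).toEquiv).symm
    omega
  have hRR2 : R = R2 := eq_of_le_of_card_le' hRleR2 hcardRR2
  -- Step D : quotient witness system
  haveI := hRnormal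
  set Q := G ⧸ R with hQ
  have hR1' : R ≤ p1.ker := hRN1
  have hR2' : R ≤ p2.ker := hRN2
  set q1 : Q →* L1 := QuotientGroup.lift R p1 hR1' with hq1
  set q2 : Q →* L2 := QuotientGroup.lift R p2 hR2' with hq2
  have hq1surj : Function.Surjective q1 := fun l => by
    obtain ⟨g, rfl⟩ := hs1 l
    exact ⟨QuotientGroup.mk g, QuotientGroup.lift_mk' R hR1' g⟩
  have hq2surj : Function.Surjective q2 := fun l => by
    obtain ⟨g, rfl⟩ := hs2 l
    exact ⟨QuotientGroup.mk g, QuotientGroup.lift_mk' R hR2' g⟩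
  -- kernels of the lifted maps
  have kerlift : ∀ (L : Type) (_ : Group L) (p : G →* L) (hRp : R ≤ p.ker),
      (QuotientGroup.lift R p hRp).ker = p.ker.map (QuotientGroup.mk' R) := by
    intro L _ p hRp
    ext q
    refine QuotientGroup.induction_on q ?_
    intro g
    simp only [MonoidHom.mem_ker, QuotientGroup.lift_mk']
    constructor
    · intro hg
      exact ⟨g, hg, rfl⟩
    · rintro ⟨n, hn, hng⟩
      have : n⁻¹ * g ∈ R := QuotientGroup.eq.mp hng
      have : n⁻¹ * g ∈ p.ker := hRp this
      have := mul_mem hn this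
      rwa [← mul_assoc, mul_inv_cancel, one_mul] at this
  -- iso between N ⧸ (R ∩ N) and image of N in Q
  have quotEquiv : ∀ (N : Subgroup G) (_ : R ≤ N) (_ : (R.subgroupOf N).Normal),
      Nonempty ((↥N ⧸ R.subgroupOf N) ≃* ↥(N.map (QuotientGroup.mk' R))) := by
    intro N hRN hnorm
    set f : ↥N →* Q := (QuotientGroup.mk' R).comp N.subtype with hf
    have hker : f.ker = R.subgroupOf N := by
      rw [hf, ← MonoidHom.comap_ker, QuotientGroup.ker_mk', Subgroup.comap_subtype]
    have hrange : f.range = N.map (QuotientGroup.mk' R) := by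
      rw [hf, MonoidHom.range_comp, Subgroup.range_subtype]
    exact ⟨(QuotientGroup.quotientMulEquivOfEq hker.symm).trans
      ((QuotientGroup.quotientKerEquivRange f).trans (MulEquiv.subgroupCongr hrange))⟩
  haveI hn1 : (R.subgroupOf N1).Normal := hRnormal.subgroupOf N1
  haveI hn2 : (R.subgroupOf N2).Normal := hRnormal.subgroupOf N2
  obtain ⟨e1⟩ := quotEquiv N1 hRN1 hn1
  obtain ⟨e2⟩ := quotEquiv N2 hRN2 hn2
  -- the middle isomorphism via φ
  have hs1' : R.subgroupOf N1 = Kradical K ↥N1 := by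
    rw [← Subgroup.comap_subtype, hR, Subgroup.comap_map_eq_self_of_injective N1.subtype_injective]
  have hs2' : R.subgroupOf N2 = Kradical K ↥N2 := by
    rw [← Subgroup.comap_subtype, hRR2, hR2,
      Subgroup.comap_map_eq_self_of_injective N2.subtype_injective]
  have hmid : (R.subgroupOf N1).map (φ : ↥N1 →* ↥N2) = R.subgroupOf N2 := by
    rw [hs1', hs2']
    exact radical_map_equiv K ↥N1 ↥N2 φ
  have emid : (↥N1 ⧸ R.subgroupOf N1) ≃* (↥N2 ⧸ R.subgroupOf N2) :=
    QuotientGroup.congr _ _ φ hmid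
  -- witness system on Q
  have hwitQ : IsWitnessSystem L1 L2 Q q1 q2 := by
    refine ⟨hq1surj, hq2surj, ?_⟩
    have k1 : q1.ker = N1.map (QuotientGroup.mk' R) := kerlift L1 _ p1 hR1'
    have k2 : q2.ker = N2.map (QuotientGroup.mk' R) := kerlift L2 _ p2 hR2'
    exact ⟨(MulEquiv.subgroupCongr k1).trans <|
      (e1.symm.trans (emid.trans e2)).trans (MulEquiv.subgroupCongr k2.symm)⟩
  -- minimality forces R = ⊥
  have hle := hminimal Q inferInstance inferInstance q1 q2 hwitQ
  have hcardeq : Nat.card G = Nat.card Q * Nat.card ↥R :=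
    Subgroup.card_eq_card_quotient_mul_card_subgroup R
  have hQpos : 0 < Nat.card Q := Nat.card_pos
  have hRcard : Nat.card ↥R = 1 := by nlinarith [Nat.card_pos (α := ↥R)]
  have hRbot : R = ⊥ := Subgroup.card_eq_one.mp hRcard
  constructor
  · exact (Subgroup.map_eq_bot_iff_of_injective (H := Kradical K ↥N1)
      N1.subtype_injective).mp hRbot
  · exact (Subgroup.map_eq_bot_iff_of_injective (H := Kradical K ↥N2)
      N2.subtype_injective).mp (by rw [← hR2, ← hRR2]; exact hRbot)

theorem kernels_radical_trivial_of_minimal_witness (K : MelnikovFormation)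
    (L1 : Type) [Group L1] [Finite L1] (L2 : Type) [Group L2] [Finite L2]
    (G : Type) [Group G] [Finite G] (p1 : G →* L1) (p2 : G →* L2)
    (hmin : IsMinimalWitnessSystem L1 L2 G p1 p2)
    (h : Kradical K ↥(p1.ker.map p2) = ⊥ ∨ Kradical K ↥(p2.ker.map p1) = ⊥) :
    Kradical K ↥p1.ker = ⊥ ∧ Kradical K ↥p2.ker = ⊥ := by
  rcases h with h1 | h2
  · exact aux_main K L1 L2 G p1 p2 hmin h1
  · have hmin' : IsMinimalWitnessSystem L2 L1 G p2 p1 := by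
      obtain ⟨⟨w1, w2, ⟨φ⟩⟩, hm⟩ := hmin
      exact ⟨⟨w2, w1, ⟨φ.symm⟩⟩, fun G' g' f' q1 q2 hw =>
        hm G' g' f' q2 q1 ⟨hw.surjective_snd, hw.surjective_fst,
          hw.ker_iso.map MulEquiv.symm⟩⟩
    obtain ⟨a, b⟩ := aux_main K L2 L1 G p2 p1 hmin' h2
    exact ⟨b, a⟩
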